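/- The matrix T maps Y into X: for every point q ∈ X and every i ∈ {1,2,3}, the vector T·Rⁱ·q lies in X. Consequently X and Y form a valid ping-pong table for ⟨R⟩ and ⟨T⟩. -/
import Mathlib


open Matrix

/-- The matrix `R`. -/
def R : Matrix (Fin 3) (Fin 3) ℝ := !![0,0,-1; 1,0,-1; 0,1,-1]

/-- The matrix `T`. -/
def T : Matrix (Fin 3) (Fin 3) ℝ := !![-1,0,0; 2,1,0; -4,0,1]

/-- The vector `u = (1,-2,1)`. -/
def u : Fin 3 → ℝ := ![1,-2,1]

/-- The vector `v = (1,0,3)`. -/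
def v : Fin 3 → ℝ := ![1,0,3]

/-- The vector `w = (0,-1,1)`. -/
def w : Fin 3 → ℝ := ![0,-1,1]

/-- The open cone `C` generated by `u`, `v`, `w`. -/
def C : Set (Fin 3 → ℝ) :=
  {p | ∃ a b c : ℝ, 0 < a ∧ 0 < b ∧ 0 < c ∧ p = a • u + b • v + c • w}

/-- `X = C ∪ (−C)`. -/
def X : Set (Fin 3 → ℝ) := C ∪ (-C)

/-- `Y = R·X ∪ R²·X ∪ R³·X`. -/
def Y : Set (Fin 3 → ℝ) :=
  R.mulVec '' X ∪ (R ^ 2).mulVec '' X ∪ (R ^ 3).mulVec '' X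

lemma mem_C {a b c : ℝ} (ha : 0 < a) (hb : 0 < b) (hc : 0 < c) :
    a • u + b • v + c • w ∈ C := ⟨a, b, c, ha, hb, hc, rfl⟩

lemma X_neg {p : Fin 3 → ℝ} (h : p ∈ X) : -p ∈ X := by
  rcases h with h | h
  · exact Or.inr (by simpa [Set.mem_neg] using h)
  · exact Or.inl (by simpa [Set.mem_neg] using h)

lemma key1 (a b c : ℝ) :
    (T * R ^ 1).mulVec (a • u + b • v + c • w)
      = (a + 2*b + c) • u + b • v + (4*b + c) • w := by
  funext i
  fin_cases i <;>
    simp [T, R, u, v, w, Matrix.mulVec, Matrix.mul_apply, dotProduct,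
      Fin.sum_univ_three, pow_succ, pow_zero] <;> ring

lemma key2 (a b c : ℝ) :
    (T * R ^ 2).mulVec (a • u + b • v + c • w)
      = -((2*a + b + c) • u + (a + 2*b + c) • v + (4*a + 4*b + 3*c) • w) := by
  funext i
  fin_cases i <;>
    simp [T, R, u, v, w, Matrix.mulVec, Matrix.mul_apply, dotProduct,
      Fin.sum_univ_three, pow_succ, pow_zero] <;> ring

lemma key3 (a b c : ℝ) :
    (T * R ^ 3).mulVec (a • u + b • v + c • w)
      = a • u + (2*a + b + c) • v + (4*a + c) • w := by
  funext i
  fin_cases i <;>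
    simp [T, R, u, v, w, Matrix.mulVec, Matrix.mul_apply, dotProduct,
      Fin.sum_univ_three, pow_succ, pow_zero] <;> ring

lemma key_C : ∀ i ∈ ({1, 2, 3} : Set ℕ), ∀ q ∈ C, (T * R ^ i).mulVec q ∈ X := by
  intro i hi q hq
  obtain ⟨a, b, c, ha, hb, hc, rfl⟩ := hq
  rcases hi with rfl | rfl | rfl
  · rw [key1]; exact Or.inl (mem_C (by linarith) hb (by linarith))
  · rw [key2]
    refine Or.inr ?_
    simp only [Set.mem_neg, neg_neg]
    exact mem_C (by linarith) (by linarith) (by linarith)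
  · rw [key3]; exact Or.inl (mem_C ha (by linarith) (by linarith))

lemma key_X : ∀ i ∈ ({1, 2, 3} : Set ℕ), ∀ q ∈ X, (T * R ^ i).mulVec q ∈ X := by
  intro i hi q hq
  rcases hq with hq | hq
  · exact key_C i hi q hq
  · have h' : -q ∈ C := by simpa [Set.mem_neg] using hq
    have := X_neg (key_C i hi (-q) h')
    simpa [Matrix.mulVec_neg] using this

/-- `T` maps `Y` into `X`: for every `q ∈ X` and `i ∈ {1,2,3}`, the vector
`T·Rⁱ·q` lies in `X`; consequently `T` maps `Y` into `X`, so `X` and `Y` form a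
valid ping-pong table for `⟨R⟩` and `⟨T⟩`. -/
theorem T_maps_Y_into_X :
    (∀ i ∈ ({1, 2, 3} : Set ℕ), ∀ q ∈ X, (T * R ^ i).mulVec q ∈ X) ∧
    (∀ y ∈ Y, T.mulVec y ∈ X) := by
  refine ⟨key_X, ?_⟩
  intro y hy
  rcases hy with (⟨x, hx, rfl⟩ | ⟨x, hx, rfl⟩) | ⟨x, hx, rfl⟩
  · have := key_X 1 (by simp) x hx
    simpa [Matrix.mulVec_mulVec, pow_one] using this
  · have := key_X 2 (by simp) x hx
    simpa [Matrix.mulVec_mulVec] using this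
  · have := key_X 3 (by simp) x hx
    simpa [Matrix.mulVec_mulVec] using this
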